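/- Let n ≥ 1 and let x be a schedule. Then the complement of H(x) is nonempty (in particular, the first job on any nonempty machine sequence is not in H(x)), and the worst-case regret is attained on extreme scenarios of jobs outside H(x): Z(x) = max over j ∉ H(x) of Q(x, r̄^j). -/

import Mathlib

open Finset

/-- A schedule assigns to each machine a finite sequence of jobs such that
every job occurs exactly once among all the sequences. -/
structure Schedule (m n : ℕ) where
  seq : Fin m → List (Fin n)
  valid : ∀ j : Fin n, (∑ i : Fin m, (seq i).count j) = 1

variable {m n : ℕ}

/-- Completion time after processing the list `L` of jobs on a machine with
processing times `q` and release dates `r`; recursively `C₀ = 0`,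
`C_k = q j_k + max C_{k-1} (r j_k)`. -/
def mComp (q r : Fin n → ℝ) (L : List (Fin n)) : ℝ :=
  L.foldl (fun c j => q j + max c (r j)) 0

/-- Makespan of the schedule `x` under the release dates `r`. -/
noncomputable def Cmax (p : Fin m → Fin n → ℝ) (x : Schedule m n) (r : Fin n → ℝ) : ℝ :=
  ⨆ i : Fin m, mComp (p i) r (x.seq i)

/-- Optimal makespan `C*(r)`: the minimum of `Cmax` over all schedules. -/
noncomputable def Cstar (p : Fin m → Fin n → ℝ) (r : Fin n → ℝ) : ℝ :=
  ⨅ x : Schedule m n, Cmax p x r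

/-- Regret of schedule `x` under scenario `r`. -/
noncomputable def regret (p : Fin m → Fin n → ℝ) (x : Schedule m n) (r : Fin n → ℝ) : ℝ :=
  Cmax p x r - Cstar p r

/-- The scenario box determined by the interval bounds. -/
def box (rlo rhi : Fin n → ℝ) : Set (Fin n → ℝ) :=
  {r | ∀ j, rlo j ≤ r j ∧ r j ≤ rhi j}

/-- Worst-case regret `Z(x)`. -/
noncomputable def Zreg (p : Fin m → Fin n → ℝ) (x : Schedule m n) (rlo rhi : Fin n → ℝ) : ℝ :=
  sSup ((fun r => regret p x r) '' box rlo rhi)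

/-- Extreme scenario `r̄^j`. -/
def extSc (rlo rhi : Fin n → ℝ) (j : Fin n) : Fin n → ℝ :=
  Function.update rlo j (rhi j)

/-- The set `H(x)` of jobs whose release interval is covered by the
processing of their predecessors (positions are 0-indexed: job at position
`k ≥ 1` has predecessors `(x.seq i).take k`). -/
def Hset (p : Fin m → Fin n → ℝ) (rlo rhi : Fin n → ℝ) (x : Schedule m n) : Set (Fin n) :=
  {j | ∃ i : Fin m, ∃ k : ℕ, 1 ≤ k ∧ (x.seq i)[k]? = some j ∧
    rhi j ≤ mComp (p i) rlo ((x.seq i).take k)}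

/-- Lower bound `LB₁(r) = max_j (r j + min_i p i j)`. -/
noncomputable def LB1 (p : Fin m → Fin n → ℝ) (r : Fin n → ℝ) : ℝ :=
  ⨆ j : Fin n, (r j + ⨅ i : Fin m, p i j)

/-- Lower bound `LB(r) = min_j r j + m⁻¹ ∑_j min_i p i j`. -/
noncomputable def LB0 (p : Fin m → Fin n → ℝ) (r : Fin n → ℝ) : ℝ :=
  (⨅ j : Fin n, r j) + (m : ℝ)⁻¹ * ∑ j : Fin n, ⨅ i : Fin m, p i j

/-- `E_j(r)`: the jobs unavailable before `j`. -/
noncomputable def Ej (r : Fin n → ℝ) (j : Fin n) : Finset (Fin n) :=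
  Finset.univ.filter fun t => r j ≤ r t

lemma Ej_nonempty (r : Fin n → ℝ) (j : Fin n) : (Ej r j).Nonempty :=
  ⟨j, by simp [Ej]⟩

/-- `W_j(E_j(r), p)` from the paper. -/
noncomputable def W2 (p : Fin m → Fin n → ℝ) (r : Fin n → ℝ) (j : Fin n) : ℝ :=
  (Ej r j).inf' (Ej_nonempty r j) r + (m : ℝ)⁻¹ * ∑ t ∈ Ej r j, ⨅ i : Fin m, p i t

/-- Lower bound `LB₂(r)`. -/
noncomputable def LB2 (p : Fin m → Fin n → ℝ) (r : Fin n → ℝ) : ℝ :=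
  ⨆ j : Fin n, W2 p r j

/-- `W̃_j(E_j(r), p_w)` from the paper, with `λ_j = ⌈|E_j(r)|/m⌉`. -/
noncomputable def W3 (p : Fin m → Fin n → ℝ) (r : Fin n → ℝ) (j : Fin n) : ℝ :=
  (Ej r j).inf' (Ej_nonempty r j) r +
    (⌈((Ej r j).card : ℝ) / (m : ℝ)⌉ : ℝ) *
      (Ej r j).inf' (Ej_nonempty r j) (fun t => ⨅ i : Fin m, p i t)

/-- Lower bound `LB₃(r)`. -/
noncomputable def LB3 (p : Fin m → Fin n → ℝ) (r : Fin n → ℝ) : ℝ :=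
  ⨆ j : Fin n, W3 p r j

/-- The combined lower bound `LB(r̄) = max {LB₁, LB₂, LB₃}`. -/
noncomputable def LBall (p : Fin m → Fin n → ℝ) (r : Fin n → ℝ) : ℝ :=
  max (LB1 p r) (max (LB2 p r) (LB3 p r))

section AuxLemmas

variable {m n : ℕ}

private lemma mem_of_getElem?' {α : Type*} {l : List α} {k : ℕ} {a : α}
    (h : l[k]? = some a) : a ∈ l := by
  obtain ⟨h1, rfl⟩ := List.getElem?_eq_some_iff.mp h
  exact List.getElem_mem h1

private lemma getElem?_zero_head {α : Type*} (l : List α) (h : l ≠ []) :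
    l[0]? = some (l.head h) := by
  cases l with
  | nil => simp at h
  | cons a L => simp


private lemma foldl_step_mono {q r r' : Fin n → ℝ} (hr : ∀ t, r t ≤ r' t) :
    ∀ (L : List (Fin n)) {c c' : ℝ}, c ≤ c' →
      L.foldl (fun c j => q j + max c (r j)) c ≤ L.foldl (fun c j => q j + max c (r' j)) c'
  | [], _, _, h => h
  | a :: L, c, c', h => by
      simp only [List.foldl_cons]
      exact foldl_step_mono hr L (add_le_add_right (max_le_max h (hr a)) _)

private lemma foldl_step_ge {q : Fin n → ℝ} (hq : ∀ t, 0 ≤ q t) (r : Fin n → ℝ) :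
    ∀ (L : List (Fin n)) (c : ℝ), c + (L.map q).sum ≤ L.foldl (fun c j => q j + max c (r j)) c
  | [], c => by simp
  | a :: L, c => by
      simp only [List.foldl_cons, List.map_cons, List.sum_cons]
      have h := foldl_step_ge hq r L (q a + max c (r a))
      have : c + (q a + (L.map q).sum) ≤ (q a + max c (r a)) + (L.map q).sum := by
        have := le_max_left c (r a); linarith
      linarith

private lemma foldl_step_shift {q r r' : Fin n → ℝ} {δ : ℝ} (hδ : 0 ≤ δ)
    (hr : ∀ t, r' t ≤ r t + δ) :
    ∀ (L : List (Fin n)) {c c' : ℝ}, c' ≤ c + δ →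
      L.foldl (fun c j => q j + max c (r' j)) c' ≤ L.foldl (fun c j => q j + max c (r j)) c + δ
  | [], _, _, h => h
  | a :: L, c, c', h => by
      simp only [List.foldl_cons]
      refine foldl_step_shift hδ hr L ?_
      have : max c' (r' a) ≤ max c (r a) + δ := by
        rw [← max_add_add_right]
        exact max_le_max h (hr a)
      linarith

private lemma le_foldl_at {q : Fin n → ℝ} (hq : ∀ t, 0 ≤ q t) (r : Fin n → ℝ) :
    ∀ (k : ℕ) (L : List (Fin n)) (j : Fin n), L[k]? = some j → ∀ c : ℝ,
      r j + ((L.drop k).map q).sum ≤ L.foldl (fun c j => q j + max c (r j)) c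
  | 0, [], j, h, c => by simp at h
  | 0, a :: L, j, h, c => by
      simp only [List.getElem?_cons_zero, Option.some.injEq] at h
      subst h
      simp only [List.drop_zero, List.map_cons, List.sum_cons, List.foldl_cons]
      have hge := foldl_step_ge hq r L (q a + max c (r a))
      have hmax := le_max_right c (r a)
      linarith
  | (k+1), [], j, h, c => by simp at h
  | (k+1), a :: L, j, h, c => by
      simp only [List.getElem?_cons_succ] at h
      simp only [List.drop_succ_cons, List.foldl_cons]
      exact le_foldl_at hq r k L j h _

private lemma mComp_nonneg {q : Fin n → ℝ} (hq : ∀ t, 0 ≤ q t) (r : Fin n → ℝ)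
    (L : List (Fin n)) : 0 ≤ mComp q r L := by
  have h := foldl_step_ge hq r L 0
  have : 0 ≤ (L.map q).sum := List.sum_nonneg (by
    intro a ha; obtain ⟨t, _, rfl⟩ := List.mem_map.mp ha; exact hq t)
  simpa [mComp] using le_trans this (by simpa using h)

private lemma mComp_mono {q r r' : Fin n → ℝ} (hr : ∀ t, r t ≤ r' t) (L : List (Fin n)) :
    mComp q r L ≤ mComp q r' L :=
  foldl_step_mono hr L le_rfl

/-- the max in `mComp` is attained at some position, chosen so that either it is
the first position or the machine is strictly idle right before it. -/
private lemma mComp_attain (q r : Fin n → ℝ) (hr : ∀ t, 0 ≤ r t) :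
    ∀ (L : List (Fin n)), L ≠ [] →
      ∃ k j, L[k]? = some j ∧
        mComp q r L ≤ r j + ((L.drop k).map q).sum ∧
        (k = 0 ∨ mComp q r (L.take k) < r j) := by
  intro L
  induction L using List.reverseRecOn with
  | nil => simp
  | append_singleton L a ih =>
    intro _
    have hsplit : mComp q r (L ++ [a]) = q a + max (mComp q r L) (r a) := by
      simp [mComp, List.foldl_append]
    rcases eq_or_ne L [] with rfl | hL
    · refine ⟨0, a, by simp, ?_, Or.inl rfl⟩
      simp only [List.nil_append] at hsplit ⊢
      rw [hsplit]
      have : mComp q r ([] : List (Fin n)) = 0 := rfl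
      rw [this, max_eq_right (hr a)]
      simp only [List.drop_zero, List.map_cons, List.map_nil, List.sum_cons, List.sum_nil]
      linarith
    · rcases le_or_gt (r a) (mComp q r L) with hle | hlt
      · obtain ⟨k, j, hkj, hle2, hcond⟩ := ih hL
        have hk : k < L.length := (List.getElem?_eq_some_iff.mp hkj).1
        refine ⟨k, j, ?_, ?_, ?_⟩
        · rw [List.getElem?_append, if_pos hk]; exact hkj
        · rw [hsplit, max_eq_left hle,
            List.drop_append_of_le_length (le_of_lt hk)]
          simp only [List.map_append, List.sum_append, List.map_cons, List.map_nil,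
            List.sum_cons, List.sum_nil]
          linarith
        · rw [List.take_append_of_le_length (le_of_lt hk)]
          exact hcond
      · refine ⟨L.length, a, List.getElem?_concat_length (l := L) (a := a), ?_, Or.inr ?_⟩
        · rw [hsplit, max_eq_right (le_of_lt hlt), List.drop_left]
          simp only [List.map_cons, List.map_nil, List.sum_cons, List.sum_nil]
          linarith
        · rw [List.take_left]
          exact hlt

private lemma two_le_count {L : List (Fin n)} {k k' : ℕ} {j : Fin n} (hkk : k < k')
    (h : L[k]? = some j) (h' : L[k']? = some j) : 2 ≤ L.count j := by
  rw [← List.take_append_drop k' L, List.count_append]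
  have h1 : j ∈ L.take k' := by
    have : (L.take k')[k]? = some j := by rw [List.getElem?_take, if_pos hkk]; exact h
    exact mem_of_getElem?' this
  have h2 : j ∈ L.drop k' := by
    have : (L.drop k')[0]? = some j := by rw [List.getElem?_drop]; simpa using h'
    exact mem_of_getElem?' this
  have := List.one_le_count_iff.mpr h1
  have := List.one_le_count_iff.mpr h2
  omega

private lemma unique_pos (x : Schedule m n) {i i' : Fin m} {k k' : ℕ} {j : Fin n}
    (h : (x.seq i)[k]? = some j) (h' : (x.seq i')[k']? = some j) : i = i' ∧ k = k' := by
  have hmem : j ∈ x.seq i := mem_of_getElem?' h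
  have hmem' : j ∈ x.seq i' := mem_of_getElem?' h'
  have hcount := x.valid j
  by_cases hii : i = i'
  · subst hii
    refine ⟨rfl, ?_⟩
    by_contra hkk
    have h2 : 2 ≤ (x.seq i).count j := by
      rcases Nat.lt_or_ge k k' with h3 | h3
      · exact two_le_count h3 h h'
      · exact two_le_count (lt_of_le_of_ne h3 (Ne.symm hkk)) h' h
    have h1 : (x.seq i).count j ≤ 1 := by
      rw [← hcount]
      exact Finset.single_le_sum (f := fun i => (x.seq i).count j)
        (fun _ _ => Nat.zero_le _) (Finset.mem_univ i)
    omega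
  · exfalso
    have hs : ({i, i'} : Finset (Fin m)).sum (fun t => (x.seq t).count j) ≤
        ∑ t, (x.seq t).count j :=
      Finset.sum_le_sum_of_subset (Finset.subset_univ _)
    rw [Finset.sum_pair hii] at hs
    have := List.one_le_count_iff.mpr hmem
    have := List.one_le_count_iff.mpr hmem'
    omega

private lemma exists_mem_machine (x : Schedule m n) (j : Fin n) : ∃ i, j ∈ x.seq i := by
  by_contra h
  push_neg at h
  have := x.valid j
  rw [Finset.sum_eq_zero (fun i _ => List.count_eq_zero.mpr (h i))] at this
  omega

private lemma le_Cmax (hm : 0 < m) (p : Fin m → Fin n → ℝ) (x : Schedule m n)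
    (r : Fin n → ℝ) (i : Fin m) : mComp (p i) r (x.seq i) ≤ Cmax p x r :=
  le_ciSup (f := fun i => mComp (p i) r (x.seq i))
    (Set.Finite.bddAbove (Set.finite_range _)) i

private lemma Cmax_nonneg (hm : 0 < m) {p : Fin m → Fin n → ℝ} (hp : ∀ i j, 0 < p i j)
    (x : Schedule m n) (r : Fin n → ℝ) : 0 ≤ Cmax p x r :=
  le_trans (mComp_nonneg (fun t => (hp ⟨0, hm⟩ t).le) r _) (le_Cmax hm p x r ⟨0, hm⟩)

private lemma Cmax_shift (hm : 0 < m) (p : Fin m → Fin n → ℝ) (x : Schedule m n)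
    {r r' : Fin n → ℝ} {δ : ℝ} (hδ : 0 ≤ δ) (hr : ∀ t, r' t ≤ r t + δ) :
    Cmax p x r' ≤ Cmax p x r + δ := by
  haveI : Nonempty (Fin m) := ⟨⟨0, hm⟩⟩
  refine ciSup_le fun i => ?_
  refine le_trans (foldl_step_shift (q := p i) hδ hr (x.seq i) (c := 0) (c' := 0)
    (by linarith)) ?_
  exact add_le_add_left (le_Cmax hm p x r i) δ

private lemma Cstar_le (hm : 0 < m) {p : Fin m → Fin n → ℝ} (hp : ∀ i j, 0 < p i j)
    (r : Fin n → ℝ) (x : Schedule m n) : Cstar p r ≤ Cmax p x r :=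
  ciInf_le ⟨0, fun b ⟨y, hy⟩ => hy ▸ Cmax_nonneg hm hp y r⟩ x

private lemma Cstar_shift (hm : 0 < m) {p : Fin m → Fin n → ℝ} (hp : ∀ i j, 0 < p i j)
    {r r' : Fin n → ℝ} {δ : ℝ} (hδ : 0 ≤ δ) (hr : ∀ t, r' t ≤ r t + δ)
    (x0 : Schedule m n) : Cstar p r' ≤ Cstar p r + δ := by
  haveI : Nonempty (Schedule m n) := ⟨x0⟩
  have h : Cstar p r' - δ ≤ Cstar p r := by
    refine le_ciInf fun y => ?_
    have h1 := Cstar_le hm hp r' y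
    have h2 := Cmax_shift hm p y hδ hr
    linarith
  linarith

private lemma extSc_mem_box {rlo rhi : Fin n → ℝ} (hlt : ∀ j, rlo j < rhi j) (j : Fin n) :
    extSc rlo rhi j ∈ box rlo rhi := by
  intro t
  rcases eq_or_ne t j with rfl | ht
  · simp [extSc, (hlt t).le]
  · simp [extSc, Function.update_of_ne ht, (hlt t).le]

end AuxLemmas
private lemma exists_good_job (hm : 0 < m) (hn : 1 ≤ n)
    (p : Fin m → Fin n → ℝ) (hp : ∀ i j, 0 < p i j)
    (rlo rhi : Fin n → ℝ) (hlo : ∀ j, 0 ≤ rlo j) (hlt : ∀ j, rlo j < rhi j)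
    (x : Schedule m n) {r : Fin n → ℝ} (hr : r ∈ box rlo rhi) :
    ∃ j, j ∉ Hset p rlo rhi x ∧ regret p x r ≤ regret p x (extSc rlo rhi j) := by
  haveI : Nonempty (Fin m) := ⟨⟨0, hm⟩⟩
  have hr0 : ∀ t, 0 ≤ r t := fun t => le_trans (hlo t) (hr t).1
  obtain ⟨i0, hi0⟩ := Finite.exists_max (fun i => mComp (p i) r (x.seq i))
  have hCmax : Cmax p x r = mComp (p i0) r (x.seq i0) :=
    le_antisymm (ciSup_le hi0) (le_Cmax hm p x r i0)
  have hne : x.seq i0 ≠ [] := by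
    intro h0
    obtain ⟨i1, hi1⟩ := exists_mem_machine x ⟨0, hn⟩
    obtain ⟨k, hk⟩ := List.getElem?_of_mem hi1
    have h1 := le_foldl_at (fun t => (hp i1 t).le) r k (x.seq i1) _ hk 0
    have h2 : p i1 ⟨0, hn⟩ ≤ (((x.seq i1).drop k).map (p i1)).sum := by
      refine List.single_le_sum ?_ _ ?_
      · intro a ha; obtain ⟨t, _, rfl⟩ := List.mem_map.mp ha; exact (hp i1 t).le
      · refine List.mem_map.mpr ⟨_, mem_of_getElem?' (k := 0)
          (by rw [List.getElem?_drop, Nat.add_zero]; exact hk), rfl⟩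
    have h3 : mComp (p i1) r (x.seq i1) ≤ mComp (p i0) r (x.seq i0) := hi0 i1
    have h4 : mComp (p i0) r (x.seq i0) = 0 := by rw [h0]; rfl
    have h5 := hr0 ⟨0, hn⟩
    have h6 := hp i1 ⟨0, hn⟩
    rw [h4] at h3
    have : r ⟨0, hn⟩ + (((x.seq i1).drop k).map (p i1)).sum ≤ 0 := le_trans h1 h3
    linarith
  obtain ⟨k, j, hkj, hle, hcond⟩ := mComp_attain (p i0) r hr0 (x.seq i0) hne
  refine ⟨j, ?_, ?_⟩
  · rintro ⟨i', k', hk1, hpos, hC⟩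
    obtain ⟨rfl, rfl⟩ := unique_pos x hkj hpos
    rcases hcond with rfl | hlt2
    · omega
    · have hmono : mComp (p i0) rlo ((x.seq i0).take k) ≤
          mComp (p i0) r ((x.seq i0).take k) :=
        mComp_mono (fun t => (hr t).1) _
      have := (hr j).2
      linarith
  · have hδ : 0 ≤ rhi j - r j := by have := (hr j).2; linarith
    have hshift : ∀ t, extSc rlo rhi j t ≤ r t + (rhi j - r j) := by
      intro t
      rcases eq_or_ne t j with rfl | ht
      · simp [extSc]
      · have := (hr t).1
        simp only [extSc, Function.update_of_ne ht]
        linarith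
    have h1 : Cmax p x r + (rhi j - r j) ≤ Cmax p x (extSc rlo rhi j) := by
      have hE : extSc rlo rhi j j = rhi j := by simp [extSc]
      have h2 := le_foldl_at (fun t => (hp i0 t).le) (extSc rlo rhi j) k (x.seq i0) j hkj 0
      rw [hE] at h2
      have h3 : mComp (p i0) (extSc rlo rhi j) (x.seq i0) ≤ Cmax p x (extSc rlo rhi j) :=
        le_Cmax hm p x _ i0
      have h4 : mComp (p i0) (extSc rlo rhi j) (x.seq i0) =
          (x.seq i0).foldl (fun c t => p i0 t + max c (extSc rlo rhi j t)) 0 := rfl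
      rw [hCmax]
      rw [h4] at h3
      linarith
    have h2 : Cstar p (extSc rlo rhi j) ≤ Cstar p r + (rhi j - r j) :=
      Cstar_shift hm hp hδ hshift x
    unfold regret
    linarith
/-- the complement of `H(x)` is nonempty (in particular the
first job of any nonempty machine sequence is not in `H(x)`), and the
worst-case regret is attained on extreme scenarios of jobs outside `H(x)`. -/
theorem worst_case_regret_outside_Hset {m n : ℕ} (hm : 0 < m) (hn : 1 ≤ n)
    (p : Fin m → Fin n → ℝ) (hp : ∀ i j, 0 < p i j)
    (rlo rhi : Fin n → ℝ) (hlo : ∀ j, 0 ≤ rlo j) (hlt : ∀ j, rlo j < rhi j)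
    (x : Schedule m n) :
    (∀ i : Fin m, ∀ h : x.seq i ≠ [],
        (x.seq i).head h ∉ Hset p rlo rhi x) ∧
      ((Hset p rlo rhi x)ᶜ).Nonempty ∧
      Zreg p x rlo rhi =
        ⨆ j : ((Hset p rlo rhi x)ᶜ : Set (Fin n)),
          regret p x (extSc rlo rhi (j : Fin n)) := by
  haveI : Nonempty (Fin m) := ⟨⟨0, hm⟩⟩
  have head_not : ∀ i : Fin m, ∀ h : x.seq i ≠ [],
      (x.seq i).head h ∉ Hset p rlo rhi x := by
    intro i h hmem
    obtain ⟨i', k', hk1, hpos, -⟩ := hmem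
    have h0 : (x.seq i)[0]? = some ((x.seq i).head h) := getElem?_zero_head _ h
    obtain ⟨-, hkk⟩ := unique_pos x h0 hpos
    omega
  have hcompl : ((Hset p rlo rhi x)ᶜ).Nonempty := by
    obtain ⟨i1, hi1⟩ := exists_mem_machine x ⟨0, hn⟩
    have hne : x.seq i1 ≠ [] := List.ne_nil_of_mem hi1
    exact ⟨(x.seq i1).head hne, head_not i1 hne⟩
  refine ⟨head_not, hcompl, ?_⟩
  haveI : Nonempty ((Hset p rlo rhi x)ᶜ : Set (Fin n)) := hcompl.to_subtype
  have hbddbox : BddAbove ((fun r => regret p x r) '' box rlo rhi) := by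
    refine ⟨Cmax p x rhi, ?_⟩
    rintro b ⟨r, hrmem, rfl⟩
    have h1 : Cmax p x r ≤ Cmax p x rhi :=
      ciSup_le fun i => le_trans (mComp_mono (fun t => (hrmem t).2) _) (le_Cmax hm p x rhi i)
    have h2 : 0 ≤ Cstar p r := by
      haveI : Nonempty (Schedule m n) := ⟨x⟩
      exact le_ciInf fun y => Cmax_nonneg hm hp y r
    simp only [regret]
    linarith
  have hbddsup : BddAbove (Set.range fun j : ((Hset p rlo rhi x)ᶜ : Set (Fin n)) =>
      regret p x (extSc rlo rhi (j : Fin n))) :=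
    Set.Finite.bddAbove (Set.finite_range _)
  apply le_antisymm
  · refine csSup_le ⟨regret p x rlo, ⟨rlo, fun t => ⟨le_rfl, (hlt t).le⟩, rfl⟩⟩ ?_
    rintro b ⟨r, hrmem, rfl⟩
    obtain ⟨j, hj, hle⟩ := exists_good_job hm hn p hp rlo rhi hlo hlt x hrmem
    exact le_trans hle (le_ciSup hbddsup ⟨j, hj⟩)
  · refine ciSup_le fun j => ?_
    exact le_csSup hbddbox ⟨extSc rlo rhi j, extSc_mem_box hlt j, rfl⟩
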